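/- For every real x > 1/4, ∑_{k=0}^∞ (2(4x−1)k − 2x − 1)/(x^{2k}·C(4k,2k)) = (8x²/(4x+1)²)·( 3·√(4x+1)·arctanh(1/√(4x+1))/(4x+1) − 4x − 4 ). -/

import Mathlib

set_option maxHeartbeats 2000000

open intervalIntegral Real MeasureTheory

private lemma beta_nat : ∀ (n m : ℕ), ∫ t in (0:ℝ)..1, t ^ m * (1 - t) ^ n
    = (m.factorial * n.factorial : ℝ) / (m + n + 1).factorial := by
  intro n
  induction n with
  | zero =>
    intro m
    simp only [pow_zero, mul_one, integral_pow, Nat.factorial_zero, Nat.cast_one,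
      Nat.add_zero, Nat.factorial_succ, Nat.cast_mul]
    have h : ((m : ℝ) + 1) ≠ 0 := by positivity
    have h2 : (m.factorial : ℝ) ≠ 0 := by positivity
    push_cast
    field_simp
    simp
  | succ n ih =>
    intro m
    have hu : ∀ t ∈ Set.uIcc (0:ℝ) 1, HasDerivAt (fun t : ℝ => (1 - t) ^ (n + 1))
        (-((n + 1 : ℝ)) * (1 - t) ^ n) t := by
      intro t _
      have h1 : HasDerivAt (fun t : ℝ => 1 - t) (-1) t := by
        simpa using (hasDerivAt_id t).const_sub 1
      have := (hasDerivAt_pow (n + 1) (1 - t)).comp t h1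
      refine this.congr_deriv ?_
      push_cast; ring
    have hv : ∀ t ∈ Set.uIcc (0:ℝ) 1, HasDerivAt (fun t : ℝ => t ^ (m + 1) / (m + 1))
        (t ^ m) t := by
      intro t _
      have := (hasDerivAt_pow (m + 1) t).div_const ((m : ℝ) + 1)
      refine this.congr_deriv ?_
      have h : ((m : ℝ) + 1) ≠ 0 := by positivity
      push_cast
      field_simp
    have hIu : IntervalIntegrable (fun t : ℝ => -((n + 1 : ℝ)) * (1 - t) ^ n)
        MeasureTheory.volume 0 1 :=
      Continuous.intervalIntegrable (by continuity) 0 1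
    have hIv : IntervalIntegrable (fun t : ℝ => t ^ m) MeasureTheory.volume 0 1 :=
      Continuous.intervalIntegrable (by continuity) 0 1
    have parts := intervalIntegral.integral_mul_deriv_eq_deriv_mul hu hv hIu hIv
    have key : ∫ t in (0:ℝ)..1, t ^ m * (1 - t) ^ (n + 1)
        = ((n + 1 : ℝ) / (m + 1)) * ∫ t in (0:ℝ)..1, t ^ (m + 1) * (1 - t) ^ n := by
      have e1 : ∫ t in (0:ℝ)..1, t ^ m * (1 - t) ^ (n+1)
          = ∫ t in (0:ℝ)..1, (1 - t) ^ (n+1) * t ^ m := by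
        congr 1; funext t; ring
      rw [e1, parts, ← intervalIntegral.integral_const_mul]
      rw [show ((1:ℝ) - 1) ^ (n+1) * (1 ^ (m+1) / ((m:ℝ)+1)) - (1 - 0) ^ (n+1) * (0 ^ (m+1) / ((m:ℝ)+1)) = 0 by
        simp]
      rw [zero_sub, ← intervalIntegral.integral_neg]
      congr 1
      funext t
      ring
    rw [key, ih (m + 1)]
    have h1 : ((m:ℝ) + 1) ≠ 0 := by positivity
    have h2 : ((m + 1 + n + 1).factorial : ℝ) ≠ 0 := by positivity
    have h3 : ((m + (n+1) + 1).factorial : ℝ) ≠ 0 := by positivity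
    have e2 : m + (n + 1) + 1 = m + 1 + n + 1 := by omega
    rw [e2]
    rw [Nat.factorial_succ m, Nat.factorial_succ n]
    push_cast
    field_simp

private lemma beta16 (k : ℕ) : 16 ^ k * ((2 * k).factorial * (2 * k).factorial) ≤ (4 * k + 1).factorial := by
  have h := Nat.four_pow_le_two_mul_add_one_mul_central_binom (2 * k)
  have hc : Nat.centralBinom (2 * k) = (4 * k).choose (2 * k) := by
    unfold Nat.centralBinom; congr 1; omega
  have hcf : (4 * k).choose (2 * k) * ((2 * k).factorial * (2 * k).factorial) = (4 * k).factorial := by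
    have := Nat.choose_mul_factorial_mul_factorial (show 2 * k ≤ 4 * k by omega)
    rw [show 4 * k - 2 * k = 2 * k by omega] at this
    rw [← this]; ring
  have h16 : (16 : ℕ) ^ k = 4 ^ (2 * k) := by rw [pow_mul]; norm_num
  calc 16 ^ k * ((2 * k).factorial * (2 * k).factorial)
      ≤ ((2 * (2 * k) + 1) * Nat.centralBinom (2 * k)) * ((2 * k).factorial * (2 * k).factorial) := by
        rw [h16]; exact Nat.mul_le_mul_right _ h
    _ = (4 * k + 1) * (4 * k).factorial := by rw [hc, mul_assoc, hcf]; ring_nf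
    _ = (4 * k + 1).factorial := by rw [Nat.factorial_succ]

private lemma aux_term (x : ℝ) (hx0 : 0 < x) (k : ℕ) :
    (2 * (4 * x - 1) * k - 2 * x - 1) / (x ^ (2 * k) * (Nat.choose (4 * k) (2 * k) : ℝ))
      = ∫ t in Set.Ioc (0:ℝ) 1,
        ((2 * (4 * x - 1) * k - 2 * x - 1) * (4 * k + 1)) * (t * (1 - t)) ^ (2 * k) / x ^ (2 * k) := by
  rw [← intervalIntegral.integral_of_le (by norm_num : (0:ℝ) ≤ 1)]
  have e1 : ∀ t : ℝ, ((2 * (4 * x - 1) * k - 2 * x - 1) * (4 * k + 1)) * (t * (1 - t)) ^ (2 * k) / x ^ (2 * k)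
      = (((2 * (4 * x - 1) * k - 2 * x - 1) * (4 * k + 1)) / x ^ (2 * k)) * (t ^ (2 * k) * (1 - t) ^ (2 * k)) := by
    intro t; rw [mul_pow]; ring
  simp_rw [e1]
  rw [intervalIntegral.integral_const_mul, beta_nat]
  have hC : ((4 * k).choose (2 * k) : ℝ) * ((2 * k).factorial * (2 * k).factorial) = (4 * k).factorial := by
    have h := Nat.choose_mul_factorial_mul_factorial (show 2 * k ≤ 4 * k by omega)
    rw [show 4 * k - 2 * k = 2 * k by omega] at h
    exact_mod_cast by rw [← h]; push_cast; ring
  have hfact : ((2 * k + 2 * k + 1).factorial : ℝ) = (4 * k + 1) * (4 * k).factorial := by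
    rw [show 2 * k + 2 * k + 1 = (4 * k) + 1 by omega, Nat.factorial_succ]
    push_cast; ring
  have hCpos : (0:ℝ) < ((4 * k).choose (2 * k) : ℝ) := by
    exact_mod_cast Nat.choose_pos (show 2 * k ≤ 4 * k by omega)
  have hxk : (x : ℝ) ^ (2 * k) ≠ 0 := pow_ne_zero _ (ne_of_gt hx0)
  have hf1 : ((2 * k).factorial : ℝ) ≠ 0 := by positivity
  have hf2 : ((4 * k).factorial : ℝ) ≠ 0 := by positivity
  rw [hfact]
  have hfac2 : ((2 * k).factorial * (2 * k).factorial : ℝ) = (4 * k).factorial / ((4 * k).choose (2 * k) : ℝ) := by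
    rw [eq_div_iff hCpos.ne']
    linear_combination hC
  rw [hfac2]
  have h4k1 : (4 * (k:ℝ) + 1) ≠ 0 := by positivity
  field_simp

private lemma aux_sumnorm (x : ℝ) (hx : 1 / 4 < x) :
    Summable fun k : ℕ => ∫ t in Set.Ioc (0:ℝ) 1,
      ‖((2 * (4 * x - 1) * k - 2 * x - 1) * (4 * k + 1)) * (t * (1 - t)) ^ (2 * k) / x ^ (2 * k)‖ := by
  have hx0 : 0 < x := lt_trans (by norm_num) hx
  set r : ℝ := 1 / (16 * x ^ 2) with hr
  have hr0 : 0 < r := by positivity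
  have hr1 : r < 1 := by
    rw [hr, div_lt_one (by positivity)]
    nlinarith
  have hrn : ‖r‖ < 1 := by rwa [Real.norm_of_nonneg hr0.le]
  -- exact value of each integral
  have hval : ∀ k : ℕ, (∫ t in Set.Ioc (0:ℝ) 1,
      ‖((2 * (4 * x - 1) * k - 2 * x - 1) * (4 * k + 1)) * (t * (1 - t)) ^ (2 * k) / x ^ (2 * k)‖)
      = |(2 * (4 * x - 1) * k - 2 * x - 1) * (4 * k + 1)| / x ^ (2 * k)
          * (((2 * k).factorial * (2 * k).factorial : ℝ) / (2 * k + 2 * k + 1).factorial) := by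
    intro k
    have e : ∀ t ∈ Set.Ioc (0:ℝ) 1,
        ‖((2 * (4 * x - 1) * k - 2 * x - 1) * (4 * k + 1)) * (t * (1 - t)) ^ (2 * k) / x ^ (2 * k)‖
        = (|(2 * (4 * x - 1) * k - 2 * x - 1) * (4 * k + 1)| / x ^ (2 * k)) * (t ^ (2 * k) * (1 - t) ^ (2 * k)) := by
      intro t ht
      have h1 : (0:ℝ) ≤ (t * (1 - t)) ^ (2 * k) := by
        rw [pow_mul]; positivity
      rw [Real.norm_eq_abs, abs_div, abs_mul, abs_of_nonneg h1,
        abs_of_nonneg (by positivity : (0:ℝ) ≤ x ^ (2 * k)), mul_pow]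
      ring
    rw [setIntegral_congr_fun measurableSet_Ioc e,
      ← intervalIntegral.integral_of_le (by norm_num : (0:ℝ) ≤ 1),
      intervalIntegral.integral_const_mul, beta_nat]
  rw [funext hval]
  -- bound
  have hb : ∀ k : ℕ,
      |(2 * (4 * x - 1) * k - 2 * x - 1) * (4 * k + 1)| / x ^ (2 * k)
          * (((2 * k).factorial * (2 * k).factorial : ℝ) / (2 * k + 2 * k + 1).factorial)
      ≤ (4 * (8 * x + 3)) * ((k:ℝ) ^ 2 * r ^ k + (2 * ((k:ℝ) * r ^ k) + r ^ k)) := by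
    intro k
    have hk0 : (0:ℝ) ≤ (k:ℝ) := Nat.cast_nonneg k
    have h1 : |(2 * (4 * x - 1) * k - 2 * x - 1) * (4 * k + 1)| ≤ (4 * (8 * x + 3)) * ((k:ℝ) + 1) ^ 2 := by
      rw [abs_mul]
      have ha : |2 * (4 * x - 1) * k - 2 * x - 1| ≤ (8 * x + 3) * ((k:ℝ) + 1) := by
        rw [abs_le]; constructor <;> nlinarith
      have hb' : |4 * (k:ℝ) + 1| = 4 * (k:ℝ) + 1 := abs_of_nonneg (by positivity)
      rw [hb']
      nlinarith [abs_nonneg (2 * (4 * x - 1) * (k:ℝ) - 2 * x - 1)]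
    have h2 : (((2 * k).factorial * (2 * k).factorial : ℝ) / (2 * k + 2 * k + 1).factorial)
        ≤ (1 / 16) ^ k := by
      have h16 : ((16:ℝ)) ^ k * ((2 * k).factorial * (2 * k).factorial) ≤ ((4 * k + 1).factorial : ℝ) := by
        exact_mod_cast beta16 k
      rw [show 2 * k + 2 * k + 1 = 4 * k + 1 by omega]
      rw [div_le_iff₀ (by positivity : (0:ℝ) < ((4 * k + 1).factorial : ℝ)), one_div, inv_pow]
      calc ((2 * k).factorial * (2 * k).factorial : ℝ)
          = ((16:ℝ) ^ k)⁻¹ * ((16:ℝ) ^ k * ((2 * k).factorial * (2 * k).factorial)) := by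
            rw [← mul_assoc, inv_mul_cancel₀ (by positivity), one_mul]
        _ ≤ ((16:ℝ) ^ k)⁻¹ * ((4 * k + 1).factorial : ℝ) :=
            mul_le_mul_of_nonneg_left h16 (by positivity)
    have h3 : ((1:ℝ) / 16) ^ k / x ^ (2 * k) = r ^ k := by
      rw [hr]
      rw [show (1:ℝ) / (16 * x ^ 2) = (1/16) * (1/x^2) by ring, mul_pow, pow_mul]
      rw [div_pow, one_pow]
      ring
    calc |(2 * (4 * x - 1) * k - 2 * x - 1) * (4 * k + 1)| / x ^ (2 * k)
          * (((2 * k).factorial * (2 * k).factorial : ℝ) / (2 * k + 2 * k + 1).factorial)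
        ≤ ((4 * (8 * x + 3)) * ((k:ℝ) + 1) ^ 2) / x ^ (2 * k) * ((1/16) ^ k) := by
          gcongr
      _ = (4 * (8 * x + 3)) * (((k:ℝ) + 1) ^ 2 * (((1:ℝ)/16) ^ k / x ^ (2*k))) := by ring
      _ = (4 * (8 * x + 3)) * (((k:ℝ) + 1) ^ 2 * r ^ k) := by rw [h3]
      _ = (4 * (8 * x + 3)) * ((k:ℝ) ^ 2 * r ^ k + (2 * ((k:ℝ) * r ^ k) + r ^ k)) := by ring
  apply Summable.of_nonneg_of_le _ hb
  · apply Summable.mul_left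
    exact (summable_pow_mul_geometric_of_norm_lt_one 2 hrn).add
      (((summable_pow_mul_geometric_of_norm_lt_one 1 hrn).congr (by intro n; rw [pow_one])).mul_left 2 |>.add
        (summable_geometric_of_lt_one hr0.le hr1))
  · intro k
    positivity

private lemma aux_pt (x : ℝ) (hx : 1 / 4 < x) (t : ℝ) (ht : t ∈ Set.Ioc (0:ℝ) 1) :
    ∑' k : ℕ, ((2 * (4 * x - 1) * k - 2 * x - 1) * (4 * k + 1)) * (t * (1 - t)) ^ (2 * k) / x ^ (2 * k)
    = x ^ 2 * (-(2 * x + 1) * x ^ 4 + (36 * x - 12) * x ^ 2 * (t - t ^ 2) ^ 2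
      + (30 * x - 3) * (t - t ^ 2) ^ 4) / (x ^ 2 - (t - t ^ 2) ^ 2) ^ 3 := by
  obtain ⟨ht0, ht1⟩ := ht
  have hx0 : 0 < x := lt_trans (by norm_num) hx
  set w : ℝ := t * (1 - t) with hw
  have hw0 : 0 ≤ w := mul_nonneg ht0.le (by linarith)
  have hw4 : w ≤ 1 / 4 := by nlinarith [sq_nonneg (t - 1/2)]
  have hwx : w < x := lt_of_le_of_lt hw4 hx
  set q : ℝ := w ^ 2 / x ^ 2 with hq
  have hq0 : 0 ≤ q := by positivity
  have hq1 : q < 1 := by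
    rw [hq, div_lt_one (by positivity)]
    nlinarith
  have hqn : ‖q‖ < 1 := by rwa [Real.norm_of_nonneg hq0]
  have h1q : x ^ 2 - w ^ 2 ≠ 0 := by nlinarith
  have h1mq : 1 - q ≠ 0 := by
    rw [hq, sub_ne_zero]
    intro h
    apply h1q
    field_simp at h
    linarith
  -- rewrite each term
  have hterm : ∀ k : ℕ, ((2 * (4 * x - 1) * k - 2 * x - 1) * (4 * k + 1)) * w ^ (2 * k) / x ^ (2 * k)
      = (8 * (2 * (4 * x - 1))) * (((k + 2).choose 2 : ℝ) * q ^ k)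
        + ((-11 * (2 * (4 * x - 1)) + 4 * (-2 * x - 1)) * ((k : ℝ) * q ^ k)
          + ((-2 * x - 1) - 8 * (2 * (4 * x - 1))) * q ^ k) := by
    intro k
    have hpow : w ^ (2 * k) / x ^ (2 * k) = q ^ k := by
      rw [hq, div_pow, pow_mul, pow_mul]
    have hch : ((k + 2).choose 2 : ℝ) = ((k : ℝ) + 2) * ((k : ℝ) + 1) / 2 := by
      rw [Nat.cast_choose_two]
      push_cast
      ring
    rw [mul_div_assoc, hpow, hch]
    ring
  rw [tsum_congr hterm]
  have s2 := hasSum_choose_mul_geometric_of_norm_lt_one 2 hqn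
  have s1 : HasSum (fun k : ℕ => (k : ℝ) * q ^ k) (q / (1 - q) ^ 2) :=
    hasSum_coe_mul_geometric_of_norm_lt_one hqn
  have s0 : HasSum (fun k : ℕ => q ^ k) (1 - q)⁻¹ := hasSum_geometric_of_norm_lt_one hqn
  have t2 := s2.mul_left (8 * (2 * (4 * x - 1)))
  have t1 := s1.mul_left (-11 * (2 * (4 * x - 1)) + 4 * (-2 * x - 1))
  have t0 := s0.mul_left ((-2 * x - 1) - 8 * (2 * (4 * x - 1)))
  have total := t2.add (t1.add t0)
  rw [total.tsum_eq]
  have hqe : 1 - q = (x ^ 2 - w ^ 2) / x ^ 2 := by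
    rw [hq]; field_simp
  rw [hqe, hq]
  have hx2 : (x:ℝ) ^ 2 ≠ 0 := by positivity
  rw [show t - t ^ 2 = w by rw [hw]; ring]
  field_simp
  rw [div_pow]
  field_simp
  ring

private lemma aux_ftc (x v : ℝ) (hx : 1 / 4 < x) (hv2 : v ^ 2 = 4 * x + 1) (hv1 : 1 < v) :
    ∫ t in (0:ℝ)..1,
      x ^ 2 * (-(2 * x + 1) * x ^ 4 + (36 * x - 12) * x ^ 2 * (t - t ^ 2) ^ 2
        + (30 * x - 3) * (t - t ^ 2) ^ 4) / (x ^ 2 - (t - t ^ 2) ^ 2) ^ 3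
    = (fun t : ℝ =>
      (16 * x ^ 6 + 16 * x ^ 7 + (-x ^ 4 - 16 * x ^ 5 - 32 * x ^ 6 - 32 * x ^ 7) * t
        + (-29 * x ^ 4 - 32 * x ^ 5) * t ^ 2 + (-3 * x ^ 2 + 126 * x ^ 4 + 288 * x ^ 5) * t ^ 3
        + (15 * x ^ 2 - 160 * x ^ 4 - 400 * x ^ 5) * t ^ 4
        + (-27 * x ^ 2 + 64 * x ^ 4 + 160 * x ^ 5) * t ^ 5
        + 21 * x ^ 2 * t ^ 6 - 6 * x ^ 2 * t ^ 7)
        / ((4 * x + 1) ^ 2 * (x ^ 2 - (t - t ^ 2) ^ 2) ^ 2)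
      + (6 * x ^ 2 / ((4 * x + 1) ^ 2 * v)) * (Real.log (v + 2 * t - 1) - Real.log (v + 1 - 2 * t))) 1
    - (fun t : ℝ =>
      (16 * x ^ 6 + 16 * x ^ 7 + (-x ^ 4 - 16 * x ^ 5 - 32 * x ^ 6 - 32 * x ^ 7) * t
        + (-29 * x ^ 4 - 32 * x ^ 5) * t ^ 2 + (-3 * x ^ 2 + 126 * x ^ 4 + 288 * x ^ 5) * t ^ 3
        + (15 * x ^ 2 - 160 * x ^ 4 - 400 * x ^ 5) * t ^ 4
        + (-27 * x ^ 2 + 64 * x ^ 4 + 160 * x ^ 5) * t ^ 5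
        + 21 * x ^ 2 * t ^ 6 - 6 * x ^ 2 * t ^ 7)
        / ((4 * x + 1) ^ 2 * (x ^ 2 - (t - t ^ 2) ^ 2) ^ 2)
      + (6 * x ^ 2 / ((4 * x + 1) ^ 2 * v)) * (Real.log (v + 2 * t - 1) - Real.log (v + 1 - 2 * t))) 0 := by
  have hx0 : 0 < x := lt_trans (by norm_num) hx
  have hv0 : 0 < v := lt_trans one_pos hv1
  have h4x : (0:ℝ) < 4 * x + 1 := by linarith
  -- positivity facts on [0,1]
  have hfacts : ∀ t ∈ Set.uIcc (0:ℝ) 1, 0 ≤ t - t ^ 2 ∧ t - t ^ 2 ≤ 1/4 := by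
    intro t ht
    rw [Set.uIcc_of_le (by norm_num : (0:ℝ) ≤ 1)] at ht
    obtain ⟨ht0, ht1⟩ := ht
    constructor
    · nlinarith
    · nlinarith [sq_nonneg (t - 1/2)]
  have hDpos : ∀ t ∈ Set.uIcc (0:ℝ) 1, 0 < x ^ 2 - (t - t ^ 2) ^ 2 := by
    intro t ht
    obtain ⟨h1, h2⟩ := hfacts t ht
    nlinarith
  -- FTC
  apply intervalIntegral.integral_eq_sub_of_hasDerivAt
    (f := fun t : ℝ =>
      (16 * x ^ 6 + 16 * x ^ 7 + (-x ^ 4 - 16 * x ^ 5 - 32 * x ^ 6 - 32 * x ^ 7) * t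
        + (-29 * x ^ 4 - 32 * x ^ 5) * t ^ 2 + (-3 * x ^ 2 + 126 * x ^ 4 + 288 * x ^ 5) * t ^ 3
        + (15 * x ^ 2 - 160 * x ^ 4 - 400 * x ^ 5) * t ^ 4
        + (-27 * x ^ 2 + 64 * x ^ 4 + 160 * x ^ 5) * t ^ 5
        + 21 * x ^ 2 * t ^ 6 - 6 * x ^ 2 * t ^ 7)
        / ((4 * x + 1) ^ 2 * (x ^ 2 - (t - t ^ 2) ^ 2) ^ 2)
      + (6 * x ^ 2 / ((4 * x + 1) ^ 2 * v)) * (Real.log (v + 2 * t - 1) - Real.log (v + 1 - 2 * t)))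
  · intro t ht
    obtain ⟨hs0, hs4⟩ := hfacts t ht
    have hD := hDpos t ht
    rw [Set.uIcc_of_le (by norm_num : (0:ℝ) ≤ 1)] at ht
    obtain ⟨ht0, ht1⟩ := ht
    have ha : 0 < v + 2 * t - 1 := by linarith
    have hb : 0 < v + 1 - 2 * t := by linarith
    have hxt : 0 < x + t - t ^ 2 := by linarith
    -- derivative of inner w = t - t^2
    have hw : HasDerivAt (fun t : ℝ => t - t ^ 2) (1 - 2 * t) t := by
      have := (hasDerivAt_id t).sub (hasDerivAt_pow 2 t)
      refine this.congr_deriv ?_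
      push_cast; ring
    -- derivative of denominator core
    have hD' : HasDerivAt (fun t : ℝ => x ^ 2 - (t - t ^ 2) ^ 2)
        (-(2 * (t - t ^ 2) * (1 - 2 * t))) t := by
      have := (hw.pow 2).const_sub (x ^ 2)
      refine this.congr_deriv ?_
      push_cast; ring
    -- denominator
    have hden : HasDerivAt (fun t : ℝ => (4 * x + 1) ^ 2 * (x ^ 2 - (t - t ^ 2) ^ 2) ^ 2)
        ((4 * x + 1) ^ 2 * (2 * (x ^ 2 - (t - t ^ 2) ^ 2) * (-(2 * (t - t ^ 2) * (1 - 2 * t))))) t := by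
      have := (hD'.pow 2).const_mul ((4 * x + 1) ^ 2)
      refine this.congr_deriv ?_
      push_cast; ring
    have hdenne : (4 * x + 1) ^ 2 * (x ^ 2 - (t - t ^ 2) ^ 2) ^ 2 ≠ 0 := by positivity
    -- numerator polynomial
    have hnum : HasDerivAt (fun t : ℝ =>
        16 * x ^ 6 + 16 * x ^ 7 + (-x ^ 4 - 16 * x ^ 5 - 32 * x ^ 6 - 32 * x ^ 7) * t
        + (-29 * x ^ 4 - 32 * x ^ 5) * t ^ 2 + (-3 * x ^ 2 + 126 * x ^ 4 + 288 * x ^ 5) * t ^ 3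
        + (15 * x ^ 2 - 160 * x ^ 4 - 400 * x ^ 5) * t ^ 4
        + (-27 * x ^ 2 + 64 * x ^ 4 + 160 * x ^ 5) * t ^ 5
        + 21 * x ^ 2 * t ^ 6 - 6 * x ^ 2 * t ^ 7)
        ((-x ^ 4 - 16 * x ^ 5 - 32 * x ^ 6 - 32 * x ^ 7)
        + (-29 * x ^ 4 - 32 * x ^ 5) * (2 * t) + (-3 * x ^ 2 + 126 * x ^ 4 + 288 * x ^ 5) * (3 * t ^ 2)
        + (15 * x ^ 2 - 160 * x ^ 4 - 400 * x ^ 5) * (4 * t ^ 3)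
        + (-27 * x ^ 2 + 64 * x ^ 4 + 160 * x ^ 5) * (5 * t ^ 4)
        + 21 * x ^ 2 * (6 * t ^ 5) - 6 * x ^ 2 * (7 * t ^ 6)) t := by
      have h1 := (hasDerivAt_id t).const_mul (-x ^ 4 - 16 * x ^ 5 - 32 * x ^ 6 - 32 * x ^ 7)
      have h2 := (hasDerivAt_pow 2 t).const_mul (-29 * x ^ 4 - 32 * x ^ 5)
      have h3 := (hasDerivAt_pow 3 t).const_mul (-3 * x ^ 2 + 126 * x ^ 4 + 288 * x ^ 5)
      have h4 := (hasDerivAt_pow 4 t).const_mul (15 * x ^ 2 - 160 * x ^ 4 - 400 * x ^ 5)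
      have h5 := (hasDerivAt_pow 5 t).const_mul (-27 * x ^ 2 + 64 * x ^ 4 + 160 * x ^ 5)
      have h6 := (hasDerivAt_pow 6 t).const_mul (21 * x ^ 2)
      have h7 := (hasDerivAt_pow 7 t).const_mul (6 * x ^ 2)
      have := ((((((h1.const_add (16 * x ^ 6 + 16 * x ^ 7)).add h2).add h3).add h4).add h5).add h6).sub h7
      refine this.congr_deriv ?_
      push_cast; ring
    have hrat := hnum.div hden hdenne
    -- log part
    have hin1 : HasDerivAt (fun t : ℝ => v + 2 * t - 1) 2 t := by
      have := (((hasDerivAt_id t).const_mul 2).const_add v).sub_const 1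
      refine this.congr_deriv ?_
      ring
    have hin2 : HasDerivAt (fun t : ℝ => v + 1 - 2 * t) (-2) t := by
      have := ((hasDerivAt_id t).const_mul 2).const_sub (v + 1)
      refine this.congr_deriv ?_
      ring
    have hlog1 : HasDerivAt (fun t : ℝ => Real.log (v + 2 * t - 1)) ((v + 2 * t - 1)⁻¹ * 2) t :=
      ((Real.hasDerivAt_log ha.ne').comp t hin1 :)
    have hlog2 : HasDerivAt (fun t : ℝ => Real.log (v + 1 - 2 * t)) ((v + 1 - 2 * t)⁻¹ * (-2)) t :=
      ((Real.hasDerivAt_log hb.ne').comp t hin2 :)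
    have hlog := (hlog1.sub hlog2).const_mul (6 * x ^ 2 / ((4 * x + 1) ^ 2 * v))
    have htot := hrat.add hlog
    refine htot.congr_deriv ?_
    -- now show g t equals the computed derivative
    have hvne : v ≠ 0 := hv0.ne'
    have hane : v + 2 * t - 1 ≠ 0 := ha.ne'
    have hbne : v + 1 - 2 * t ≠ 0 := hb.ne'
    have hxtne : x + t - t ^ 2 ≠ 0 := hxt.ne'
    have hDne : x ^ 2 - (t - t ^ 2) ^ 2 ≠ 0 := hD.ne'
    have hlogsimp : (v + 2 * t - 1)⁻¹ * 2 - (v + 1 - 2 * t)⁻¹ * (-2) = v / (x + t - t ^ 2) := by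
      rw [eq_div_iff hxtne]
      field_simp
      linear_combination (-v) * hv2
    rw [hlogsimp]
    have hDne2 : x ^ 2 - t ^ 2 * (1 - t) ^ 2 ≠ 0 := by
      intro h; apply hDne; linear_combination h
    field_simp
    ring
  · apply ContinuousOn.intervalIntegrable
    apply ContinuousOn.div
    · fun_prop
    · fun_prop
    · intro t ht
      exact pow_ne_zero 3 (hDpos t ht).ne'

private lemma aux_fin (x v : ℝ) (hx : 1 / 4 < x) (hv2 : v ^ 2 = 4 * x + 1) (hv1 : 1 < v) :
    (fun t : ℝ =>
      (16 * x ^ 6 + 16 * x ^ 7 + (-x ^ 4 - 16 * x ^ 5 - 32 * x ^ 6 - 32 * x ^ 7) * t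
        + (-29 * x ^ 4 - 32 * x ^ 5) * t ^ 2 + (-3 * x ^ 2 + 126 * x ^ 4 + 288 * x ^ 5) * t ^ 3
        + (15 * x ^ 2 - 160 * x ^ 4 - 400 * x ^ 5) * t ^ 4
        + (-27 * x ^ 2 + 64 * x ^ 4 + 160 * x ^ 5) * t ^ 5
        + 21 * x ^ 2 * t ^ 6 - 6 * x ^ 2 * t ^ 7)
        / ((4 * x + 1) ^ 2 * (x ^ 2 - (t - t ^ 2) ^ 2) ^ 2)
      + (6 * x ^ 2 / ((4 * x + 1) ^ 2 * v)) * (Real.log (v + 2 * t - 1) - Real.log (v + 1 - 2 * t))) 1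
    - (fun t : ℝ =>
      (16 * x ^ 6 + 16 * x ^ 7 + (-x ^ 4 - 16 * x ^ 5 - 32 * x ^ 6 - 32 * x ^ 7) * t
        + (-29 * x ^ 4 - 32 * x ^ 5) * t ^ 2 + (-3 * x ^ 2 + 126 * x ^ 4 + 288 * x ^ 5) * t ^ 3
        + (15 * x ^ 2 - 160 * x ^ 4 - 400 * x ^ 5) * t ^ 4
        + (-27 * x ^ 2 + 64 * x ^ 4 + 160 * x ^ 5) * t ^ 5
        + 21 * x ^ 2 * t ^ 6 - 6 * x ^ 2 * t ^ 7)
        / ((4 * x + 1) ^ 2 * (x ^ 2 - (t - t ^ 2) ^ 2) ^ 2)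
      + (6 * x ^ 2 / ((4 * x + 1) ^ 2 * v)) * (Real.log (v + 2 * t - 1) - Real.log (v + 1 - 2 * t))) 0
    = (8 * x ^ 2 / (4 * x + 1) ^ 2) *
        (3 * v * ((1 / 2) * Real.log ((1 + 1 / v) / (1 - 1 / v))) / (4 * x + 1) - 4 * x - 4) := by
  have hx0 : 0 < x := lt_trans (by norm_num) hx
  have hv0 : 0 < v := lt_trans one_pos hv1
  have hvm : 0 < v - 1 := by linarith
  have hvp : 0 < v + 1 := by linarith
  have harg : (1 + 1 / v) / (1 - 1 / v) = (v + 1) / (v - 1) := by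
    have h1 : 1 - 1 / v ≠ 0 := by
      have : 1 / v < 1 := by rw [div_lt_one hv0]; exact hv1
      linarith
    rw [div_eq_div_iff h1 hvm.ne']
    field_simp
  rw [harg, Real.log_div hvp.ne' hvm.ne']
  norm_num
  rw [show v + 1 - 2 = v - 1 by ring, ← hv2]
  have hvne : v ≠ 0 := (lt_trans one_pos hv1).ne'
  have hxne : x ≠ 0 := hx0.ne'
  field_simp
  ring

theorem stmt_12 (x : ℝ) (hx : 1 / 4 < x) :
    ∑' k : ℕ, (2 * (4 * x - 1) * k - 2 * x - 1) /
        (x ^ (2 * k) * (Nat.choose (4 * k) (2 * k) : ℝ)) =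
      (8 * x ^ 2 / (4 * x + 1) ^ 2) *
        (3 * Real.sqrt (4 * x + 1) *
            ((1 / 2) * Real.log ((1 + 1 / Real.sqrt (4 * x + 1)) / (1 - 1 / Real.sqrt (4 * x + 1)))) /
            (4 * x + 1) - 4 * x - 4) := by
  have hx0 : 0 < x := lt_trans (by norm_num) hx
  have hv2 : Real.sqrt (4 * x + 1) ^ 2 = 4 * x + 1 := Real.sq_sqrt (by linarith)
  have hv1 : 1 < Real.sqrt (4 * x + 1) := by
    nlinarith [Real.sqrt_nonneg (4 * x + 1)]
  have hint : ∀ k : ℕ, MeasureTheory.IntegrableOn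
      (fun t : ℝ => ((2 * (4 * x - 1) * k - 2 * x - 1) * (4 * k + 1)) * (t * (1 - t)) ^ (2 * k) / x ^ (2 * k))
      (Set.Ioc (0:ℝ) 1) MeasureTheory.volume := by
    intro k
    apply Continuous.integrableOn_Ioc
    exact ((continuous_const.mul ((continuous_id.mul (continuous_const.sub continuous_id)).pow _)).div_const _)
  calc ∑' k : ℕ, (2 * (4 * x - 1) * k - 2 * x - 1) /
        (x ^ (2 * k) * (Nat.choose (4 * k) (2 * k) : ℝ))
      = ∑' k : ℕ, ∫ t in Set.Ioc (0:ℝ) 1,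
          ((2 * (4 * x - 1) * k - 2 * x - 1) * (4 * k + 1)) * (t * (1 - t)) ^ (2 * k) / x ^ (2 * k) :=
        tsum_congr (fun k => aux_term x hx0 k)
    _ = ∫ t in Set.Ioc (0:ℝ) 1, ∑' k : ℕ,
          ((2 * (4 * x - 1) * k - 2 * x - 1) * (4 * k + 1)) * (t * (1 - t)) ^ (2 * k) / x ^ (2 * k) :=
        MeasureTheory.integral_tsum_of_summable_integral_norm hint (aux_sumnorm x hx)
    _ = ∫ t in Set.Ioc (0:ℝ) 1,
          x ^ 2 * (-(2 * x + 1) * x ^ 4 + (36 * x - 12) * x ^ 2 * (t - t ^ 2) ^ 2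
            + (30 * x - 3) * (t - t ^ 2) ^ 4) / (x ^ 2 - (t - t ^ 2) ^ 2) ^ 3 :=
        MeasureTheory.setIntegral_congr_fun measurableSet_Ioc (fun t ht => aux_pt x hx t ht)
    _ = ∫ t in (0:ℝ)..1,
          x ^ 2 * (-(2 * x + 1) * x ^ 4 + (36 * x - 12) * x ^ 2 * (t - t ^ 2) ^ 2
            + (30 * x - 3) * (t - t ^ 2) ^ 4) / (x ^ 2 - (t - t ^ 2) ^ 2) ^ 3 :=
        (intervalIntegral.integral_of_le (by norm_num)).symm
    _ = _ := (aux_ftc x (Real.sqrt (4 * x + 1)) hx hv2 hv1).trans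
        (aux_fin x (Real.sqrt (4 * x + 1)) hx hv2 hv1)
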